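/- Let p be an odd positive integer and let G be a finite simple graph with odd girth at least p+1, and set q = wcol_p(G). Then the chromatic number of the exact p-power graph of G satisfies χ(G^[♯p]) ≤ (⌊p/2⌋+2)^q. -/

import Mathlib

open SimpleGraph

variable {V : Type*}

/-- The exact `p`-power graph: distinct vertices adjacent iff joined by a path of length exactly `p`. -/
def exactPowerGraph (G : SimpleGraph V) (p : ℕ) : SimpleGraph V where
  Adj x y := x ≠ y ∧ ∃ w : G.Walk x y, w.IsPath ∧ w.length = p
  symm := by
    constructor
    rintro x y ⟨h1, w, hw, hl⟩
    exact ⟨h1.symm, w.reverse, hw.reverse, by simpa using hl⟩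
  loopless := by constructor; rintro x ⟨h1, -⟩; exact h1 rfl

/-- `x` is weakly `k`-accessible from `y` w.r.t. the linear order `L`. -/
def WeaklyAccessible (G : SimpleGraph V) (L : LinearOrder V) (k : ℕ) (x y : V) : Prop :=
  L.lt x y ∧ ∃ w : G.Walk x y, w.IsPath ∧ w.length ≤ k ∧
    ∀ z ∈ w.support, z ≠ x → z ≠ y → L.lt x z

/-- The weak `k`-colouring number. -/
noncomputable def wcol (G : SimpleGraph V) (k : ℕ) : ℕ :=
  1 + sInf { m : ℕ | ∃ L : LinearOrder V, ∀ y : V,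
      {x : V | WeaklyAccessible G L k x y}.ncard ≤ m }

/-- `G` has odd girth at least `m`: no odd cycle of length less than `m`. -/
def OddGirthAtLeast (G : SimpleGraph V) (m : ℕ) : Prop :=
  ∀ (v : V) (c : G.Walk v v), c.IsCycle → Odd c.length → m ≤ c.length

namespace ExactPowerAux

variable {G : SimpleGraph V}

/-- A closed walk that is a path must be trivial. -/
lemma closed_path_length {a : V} (w : G.Walk a a) (h : w.IsPath) : w.length = 0 := by
  cases w with
  | nil => rfl
  | cons hadj rest =>
    rw [SimpleGraph.Walk.cons_isPath_iff] at h
    exact absurd rest.end_mem_support h.2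

/-- If a path from `x` to `y` contains the edge `s(y,x)`, it has length 1. -/
lemma path_edge_end {x y : V} (w : G.Walk x y) : w.IsPath → s(y, x) ∈ w.edges →
    w.length = 1 := by
  induction w with
  | nil => intro _ he; simp at he
  | @cons a b c hadj rest ih =>
    intro hw he
    rw [SimpleGraph.Walk.cons_isPath_iff] at hw
    rw [SimpleGraph.Walk.edges_cons, List.mem_cons] at he
    rcases he with he | he
    · rw [Sym2.eq_iff] at he
      rcases he with ⟨hca, -⟩ | ⟨hcb, -⟩
      · exact absurd (hca ▸ rest.end_mem_support) hw.2
      · subst hcb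
        have h0 := closed_path_length rest hw.1
        rw [SimpleGraph.Walk.length_cons, h0]
    · exact absurd (SimpleGraph.Walk.snd_mem_support_of_mem_edges rest he) hw.2

/-- With odd girth at least `p+1` there is no odd closed walk of length at most `p`. -/
lemma no_short_odd (p : ℕ) (hg : OddGirthAtLeast G (p + 1)) :
    ∀ n, n ≤ p → ∀ {v : V} (w : G.Walk v v), w.length = n → ¬ Odd n := by
  classical
  intro n
  induction n using Nat.strong_induction_on with
  | _ n IH =>
    intro hnp v w hlen hodd
    by_cases hnodup : w.support.tail.Nodup
    · -- `w` is (essentially) a cycle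
      cases w with
      | nil =>
        rw [SimpleGraph.Walk.length_nil] at hlen
        rw [Nat.odd_iff] at hodd
        omega
      | @cons _ z _ hadj rest =>
        have hrest : rest.IsPath := by
          rw [SimpleGraph.Walk.isPath_def]
          simpa using hnodup
        have hedge : ¬ s(v, z) ∈ rest.edges := by
          intro hmem
          have h1 := path_edge_end rest hrest hmem
          rw [SimpleGraph.Walk.length_cons, h1] at hlen
          rw [Nat.odd_iff] at hodd
          omega
        have hcyc : (SimpleGraph.Walk.cons hadj rest).IsCycle :=
          (SimpleGraph.Walk.cons_isCycle_iff rest hadj).2 ⟨hrest, hedge⟩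
        have := hg v (SimpleGraph.Walk.cons hadj rest) hcyc (hlen ▸ hodd)
        omega
    · -- there is a repeated vertex: split into two shorter closed walks
      obtain ⟨u, hu2⟩ : ∃ u, 2 ≤ w.support.tail.count u := by
        by_contra hc
        push_neg at hc
        exact hnodup (List.nodup_iff_count_le_one.2 fun a => by have := hc a; omega)
      have humem : u ∈ w.support :=
        List.mem_of_mem_tail (List.count_pos_iff.mp (by omega))
      have hlenr : (w.rotate u humem).length = n := by
        have h1 := congrArg SimpleGraph.Walk.length (w.take_spec humem)
        rw [SimpleGraph.Walk.length_append] at h1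
        rw [SimpleGraph.Walk.rotate, SimpleGraph.Walk.length_append]
        omega
      have hcnt : 2 ≤ (w.rotate u humem).support.tail.count u := by
        have hperm : (w.rotate u humem).support.tail ~r w.support.tail :=
          w.support_rotate u humem
        rw [hperm.perm.count_eq]
        exact hu2
      generalize hwr : w.rotate u humem = wr at hlenr hcnt
      cases wr with
      | nil => simp at hcnt
      | @cons _ z _ hadj rest =>
        rw [SimpleGraph.Walk.support_cons, List.tail_cons] at hcnt
        have hmem2 : u ∈ rest.support := List.count_pos_iff.mp (by omega)
        have hspec := rest.take_spec hmem2
        have hlens : 1 + ((rest.takeUntil u hmem2).length + (rest.dropUntil u hmem2).length)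
            = n := by
          have h2 := congrArg SimpleGraph.Walk.length hspec
          rw [SimpleGraph.Walk.length_append] at h2
          rw [SimpleGraph.Walk.length_cons] at hlenr
          omega
        have ht2pos : 1 ≤ (rest.dropUntil u hmem2).length := by
          by_contra hc
          push_neg at hc
          have h0 : (rest.dropUntil u hmem2).length = 0 := by omega
          have hsupp : rest.support
              = (rest.takeUntil u hmem2).support ++ (rest.dropUntil u hmem2).support.tail := by
            conv_lhs => rw [← hspec]
            exact SimpleGraph.Walk.support_append _ _
          have htl : (rest.dropUntil u hmem2).support.tail = [] := by
            have h3 := (rest.dropUntil u hmem2).length_support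
            rw [h0] at h3
            cases h : (rest.dropUntil u hmem2).support with
            | nil => exact absurd h (SimpleGraph.Walk.support_ne_nil _)
            | cons a t =>
              rw [h] at h3
              simp only [List.length_cons] at h3
              have : t = [] := List.length_eq_zero_iff.mp (by omega)
              simp [this]
          rw [hsupp, htl, List.append_nil,
            SimpleGraph.Walk.count_support_takeUntil_eq_one rest hmem2] at hcnt
          omega
        have hsplit : Odd (1 + (rest.takeUntil u hmem2).length)
            ∨ Odd (rest.dropUntil u hmem2).length := by
          rw [Nat.odd_iff] at hodd ⊢
          rw [Nat.odd_iff]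
          omega
        rcases hsplit with ho | ho
        · exact IH (1 + (rest.takeUntil u hmem2).length) (by omega) (by omega)
            (SimpleGraph.Walk.cons hadj (rest.takeUntil u hmem2))
            (by rw [SimpleGraph.Walk.length_cons]; omega) ho
        · exact IH (rest.dropUntil u hmem2).length (by omega) (by omega)
            (rest.dropUntil u hmem2) rfl ho

/-- Two walks between the same endpoints whose total length is at most `p` have the
same parity. -/
lemma walk_parity (p : ℕ) (hg : OddGirthAtLeast G (p + 1)) {x u : V}
    (w1 w2 : G.Walk x u) (h : w1.length + w2.length ≤ p) :
    w1.length % 2 = w2.length % 2 := by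
  have hclosed : (w1.append w2.reverse).length = w1.length + w2.length := by
    rw [SimpleGraph.Walk.length_append, SimpleGraph.Walk.length_reverse]
  have := no_short_odd p hg (w1.length + w2.length) h (w1.append w2.reverse) hclosed
  rw [Nat.odd_iff] at this
  omega

section Ordered

variable [L : LinearOrder V]

/-- An admissible connection: a walk from `m` to `u` of length `ℓ` all of whose vertices
other than the endpoints are above `m`. -/
def Adm (G : SimpleGraph V) (m u : V) (ℓ : ℕ) : Prop :=
  ∃ w : G.Walk m u, w.length = ℓ ∧ ∀ z ∈ w.support, z ≠ m → z ≠ u → m < z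

noncomputable def rho (G : SimpleGraph V) (m u : V) : ℕ := sInf {ℓ | Adm G m u ℓ}

lemma adm_self (G : SimpleGraph V) (v : V) : Adm G v v 0 :=
  ⟨SimpleGraph.Walk.nil, rfl, by simp⟩

lemma wa_of_adm {p : ℕ} {m u : V} (hlt : m < u) {ℓ : ℕ} (h : Adm G m u ℓ) (hle : ℓ ≤ p) :
    WeaklyAccessible G L p m u := by
  obtain ⟨w, hwlen, hwcond⟩ := h
  refine ⟨hlt, w.bypass, w.bypass_isPath, ?_, ?_⟩
  · exact le_trans (hwlen ▸ w.length_bypass_le) hle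
  · intro z hz hzm hzu
    exact hwcond z (w.support_bypass_subset hz) hzm hzu

lemma adm_compose {z z' u : V} {ℓ₁ ℓ₂ : ℕ} (hzz' : z < z') (hz'u : z' < u)
    (h1 : Adm G z u ℓ₁) (h2 : Adm G z' u ℓ₂) : Adm G z z' (ℓ₁ + ℓ₂) := by
  obtain ⟨w1, hw1len, hw1⟩ := h1
  obtain ⟨w2, hw2len, hw2⟩ := h2
  refine ⟨w1.append w2.reverse, ?_, ?_⟩
  · rw [SimpleGraph.Walk.length_append, SimpleGraph.Walk.length_reverse, hw1len, hw2len]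
  · intro t ht htz htz'
    rw [SimpleGraph.Walk.support_append] at ht
    rcases List.mem_append.mp ht with ht | ht
    · rcases eq_or_ne t u with rfl | htu
      · exact lt_trans hzz' hz'u
      · exact hw1 t ht htz htu
    · have ht' : t ∈ w2.support := by
        have h3 := List.mem_of_mem_tail ht
        rwa [SimpleGraph.Walk.support_reverse, List.mem_reverse] at h3
      rcases eq_or_ne t u with rfl | htu
      · exact lt_trans hzz' hz'u
      · exact lt_trans hzz' (hw2 t ht' htz' htu)

open Classical in
noncomputable def iotaStep (G : SimpleGraph V) (p q : ℕ) (hq0 : 0 < q) (y : V)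
    (rec : ∀ x : V, x < y → Fin q) : Fin q :=
  if h : ∃ i : Fin q, ∀ x, ∀ hx : WeaklyAccessible G L p x y, rec x hx.1 ≠ i then h.choose
  else ⟨0, hq0⟩

noncomputable def iotaF [Finite V] (G : SimpleGraph V) (p q : ℕ) (hq0 : 0 < q) : V → Fin q :=
  WellFounded.fix (IsWellFounded.wf (r := ((· < ·) : V → V → Prop))) (iotaStep G p q hq0)

lemma iotaF_eq [Finite V] (G : SimpleGraph V) (p q : ℕ) (hq0 : 0 < q) (y : V) :
    iotaF G p q hq0 y = iotaStep G p q hq0 y (fun x _ => iotaF G p q hq0 x) :=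
  WellFounded.fix_eq _ _ y

lemma iotaStep_spec (G : SimpleGraph V) (p q : ℕ) (hq0 : 0 < q) (y : V)
    (rec : ∀ x : V, x < y → Fin q)
    (hex : ∃ i : Fin q, ∀ x, ∀ hx : WeaklyAccessible G L p x y, rec x hx.1 ≠ i) :
    ∀ x, ∀ hx : WeaklyAccessible G L p x y, rec x hx.1 ≠ iotaStep G p q hq0 y rec := by
  intro x hx
  unfold iotaStep
  rw [dif_pos hex]
  exact hex.choose_spec x hx

lemma iotaF_spec [Fintype V] (G : SimpleGraph V) (p q : ℕ) (hq0 : 0 < q)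
    (hQ : ∀ y : V, {x : V | WeaklyAccessible G L p x y}.ncard < q) :
    ∀ x y, WeaklyAccessible G L p x y → iotaF G p q hq0 x ≠ iotaF G p q hq0 y := by
  intro x y hxy
  have hex : ∃ i : Fin q, ∀ x, ∀ hx : WeaklyAccessible G L p x y,
      iotaF G p q hq0 x ≠ i := by
    by_contra hno
    push_neg at hno
    have hsub : (Set.univ : Set (Fin q)) ⊆
        (iotaF G p q hq0) '' {x : V | WeaklyAccessible G L p x y} := by
      intro i _
      obtain ⟨x', hx', hxi⟩ := hno i
      exact ⟨x', hx', hxi⟩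
    have h1 := Set.ncard_le_ncard hsub (Set.toFinite _)
    have h2 := Set.ncard_image_le (f := iotaF G p q hq0)
      (s := {x : V | WeaklyAccessible G L p x y}) (Set.toFinite _)
    rw [Set.ncard_univ, Nat.card_eq_fintype_card, Fintype.card_fin] at h1
    have h3 := hQ y
    omega
  have h := iotaStep_spec G p q hq0 y (fun x _ => iotaF G p q hq0 x) hex x hxy
  rw [iotaF_eq G p q hq0 y]
  exact h

/-- The main colouring construction. -/
theorem main_colorable [Fintype V] (G : SimpleGraph V) (p q s : ℕ)
    (hp2 : p = 2 * s + 1) (hg : OddGirthAtLeast G (p + 1))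
    (hQ : ∀ y : V, {x : V | WeaklyAccessible G L p x y}.ncard < q) :
    (exactPowerGraph G p).Colorable ((s + 2) ^ q) := by
  classical
  rcases isEmpty_or_nonempty V with hV | hV
  · exact ⟨SimpleGraph.Coloring.mk (fun v => isEmptyElim v) (fun {v} => isEmptyElim v)⟩
  have hq0 : 0 < q := lt_of_le_of_lt (Nat.zero_le _) (hQ (Classical.arbitrary V))
  set ι : V → Fin q := iotaF G p q hq0 with hι_def
  have hι : ∀ x y, WeaklyAccessible G L p x y → ι x ≠ ι y := iotaF_spec G p q hq0 hQ
  set Dmem : V → V → Prop := fun m v => m ≤ v ∧ ∃ ℓ, ℓ ≤ s ∧ Adm G m v ℓ with hD_def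
  have hDlt : ∀ v m m', Dmem m v → Dmem m' v → m < m' → ι m ≠ ι m' := by
    intro v m m' hm hm' hlt
    obtain ⟨hmv, ℓ, hℓ, hadm⟩ := hm
    obtain ⟨hm'v, ℓ', hℓ', hadm'⟩ := hm'
    rcases eq_or_ne m' v with rfl | hne
    · exact hι m m' (wa_of_adm hlt hadm (by omega))
    · have hm'ltv : m' < v := lt_of_le_of_ne hm'v hne
      have hcomp : Adm G m m' (ℓ + ℓ') := adm_compose hlt hm'ltv hadm hadm'
      exact hι m m' (wa_of_adm hlt hcomp (by omega))
  have hDinj : ∀ v m m', Dmem m v → Dmem m' v → ι m = ι m' → m = m' := by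
    intro v m m' hm hm' heq
    rcases lt_trichotomy m m' with h | h | h
    · exact absurd heq (hDlt v m m' hm hm' h)
    · exact h
    · exact absurd heq.symm (hDlt v m' m hm' hm h)
  set colN : V → Fin q → ℕ :=
    fun v i => if h : ∃ m, Dmem m v ∧ ι m = i then rho G h.choose v else s + 1
    with hcolN_def
  have hcol_bound : ∀ v i, colN v i < s + 2 := by
    intro v i
    simp only [hcolN_def]
    split_ifs with h
    · obtain ⟨⟨hle, ℓ, hℓs, hadm⟩, -⟩ := h.choose_spec
      have := Nat.sInf_le (s := {ℓ | Adm G h.choose v ℓ}) hadm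
      have : rho G h.choose v ≤ ℓ := this
      omega
    · omega
  set col : V → (Fin q → Fin (s + 2)) := fun v i => ⟨colN v i, hcol_bound v i⟩ with hcol_def
  have hcol_eval : ∀ v m, Dmem m v → colN v (ι m) = rho G m v := by
    intro v m hm
    have hex : ∃ m', Dmem m' v ∧ ι m' = ι m := ⟨m, hm, rfl⟩
    simp only [hcolN_def]
    rw [dif_pos hex, hDinj v _ _ hex.choose_spec.1 hm hex.choose_spec.2]
  have KEY : ∀ m u w a b, Adm G m u a → Adm G m w b → a ≤ s → a + b = p →
      m ≤ u → m < w → col u ≠ col w := by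
    intro m u w a b hau haw has hab hmu hmw heq
    have hDu : Dmem m u := ⟨hmu, a, has, hau⟩
    have hne1 : {ℓ | Adm G m u ℓ}.Nonempty := ⟨a, hau⟩
    have hα_mem : Adm G m u (rho G m u) := Nat.sInf_mem hne1
    have hα_le : rho G m u ≤ a := Nat.sInf_le hau
    have h1 : colN u (ι m) = rho G m u := hcol_eval u m hDu
    have h2 : colN w (ι m) = rho G m u := by
      have h3 : col u (ι m) = col w (ι m) := by rw [heq]
      have h4 : colN u (ι m) = colN w (ι m) := by
        have := congrArg Fin.val h3
        simpa [hcol_def] using this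
      omega
    by_cases hex : ∃ m'', Dmem m'' w ∧ ι m'' = ι m
    · have hval : rho G hex.choose w = rho G m u := by
        have h5 : colN w (ι m) = rho G hex.choose w := by
          simp only [hcolN_def]
          rw [dif_pos hex]
        omega
      obtain ⟨hDw'', hι''⟩ := hex.choose_spec
      rcases eq_or_ne hex.choose m with hmm | hne
      · rw [hmm] at hval
        have hbne : {ℓ | Adm G m w ℓ}.Nonempty := ⟨b, haw⟩
        have hαw : Adm G m w (rho G m u) := hval ▸ Nat.sInf_mem hbne
        have par1 : rho G m u % 2 = a % 2 := by
          obtain ⟨w1, hw1len, -⟩ := hα_mem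
          obtain ⟨w2, hw2len, -⟩ := hau
          have := walk_parity p hg w1 w2 (by omega)
          omega
        have par2 : rho G m u % 2 = b % 2 := by
          obtain ⟨w3, hw3len, -⟩ := hαw
          obtain ⟨w4, hw4len, -⟩ := haw
          have := walk_parity p hg w3 w4 (by omega)
          omega
        omega
      · rcases eq_or_ne hex.choose w with hww | hnew
        · have h0 : rho G w w = 0 := Nat.le_zero.mp (Nat.sInf_le (adm_self G w))
          rw [hww] at hval
          have hmu0 : rho G m u = 0 := by omega
          have hmequ : m = u := by
            obtain ⟨w0, hw0len, -⟩ := hα_mem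
            rw [hmu0] at hw0len
            exact SimpleGraph.Walk.eq_of_length_eq_zero hw0len
          have hwa : WeaklyAccessible G L p m w := wa_of_adm hmw haw (by omega)
          exact hι m w hwa (by rw [← hι'', hww])
        · obtain ⟨hm''le, ℓ'', hℓ''s, hadm''⟩ := hDw''
          have hm''w : hex.choose < w := lt_of_le_of_ne hm''le hnew
          have hne2 : {ℓ | Adm G hex.choose w ℓ}.Nonempty := ⟨ℓ'', hadm''⟩
          have hadm''α : Adm G hex.choose w (rho G m u) := hval ▸ Nat.sInf_mem hne2
          rcases lt_or_gt_of_ne hne with hlt | hlt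
          · have hcomp : Adm G hex.choose m (rho G m u + b) :=
              adm_compose hlt hmw hadm''α haw
            exact hι hex.choose m (wa_of_adm hlt hcomp (by omega)) hι''
          · have hcomp : Adm G m hex.choose (b + rho G m u) :=
              adm_compose hlt hm''w haw hadm''α
            exact hι m hex.choose (wa_of_adm hlt hcomp (by omega)) hι''.symm
    · have h6 : colN w (ι m) = s + 1 := by
        simp only [hcolN_def]
        rw [dif_neg hex]
      omega
  have valid : ∀ {x y : V}, (exactPowerGraph G p).Adj x y → col x ≠ col y := by
    intro x y hadj
    obtain ⟨hne, P, hP, hPlen⟩ := hadj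
    obtain ⟨m, hm_mem, hmin⟩ : ∃ m, m ∈ P.support ∧ ∀ z ∈ P.support, m ≤ z := by
      have hSF : P.support.toFinset.Nonempty :=
        ⟨x, List.mem_toFinset.mpr P.start_mem_support⟩
      exact ⟨P.support.toFinset.min' hSF,
        List.mem_toFinset.mp (P.support.toFinset.min'_mem hSF),
        fun z hz => P.support.toFinset.min'_le z (List.mem_toFinset.mpr hz)⟩
    have hsum : (P.takeUntil m hm_mem).length + (P.dropUntil m hm_mem).length = p := by
      have h7 := congrArg SimpleGraph.Walk.length (P.take_spec hm_mem)
      rw [SimpleGraph.Walk.length_append] at h7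
      omega
    have hadm1 : Adm G m x (P.takeUntil m hm_mem).length := by
      refine ⟨(P.takeUntil m hm_mem).reverse, SimpleGraph.Walk.length_reverse _, ?_⟩
      intro z hz hzm _
      have hz' : z ∈ P.support := by
        apply SimpleGraph.Walk.support_takeUntil_subset P hm_mem
        rwa [SimpleGraph.Walk.support_reverse, List.mem_reverse] at hz
      exact lt_of_le_of_ne (hmin z hz') (Ne.symm hzm)
    have hadm2 : Adm G m y (P.dropUntil m hm_mem).length := by
      refine ⟨P.dropUntil m hm_mem, rfl, ?_⟩
      intro z hz hzm _
      exact lt_of_le_of_ne (hmin z (SimpleGraph.Walk.support_dropUntil_subset P hm_mem hz))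
        (Ne.symm hzm)
    intro heq
    rcases le_or_gt (P.takeUntil m hm_mem).length s with hc | hc
    · have hmy : m ≠ y := by
        intro h
        have hpath2 : (P.dropUntil m hm_mem).IsPath := hP.dropUntil hm_mem
        subst h
        have h8 := closed_path_length _ hpath2
        omega
      exact KEY m x y _ _ hadm1 hadm2 hc hsum (hmin x P.start_mem_support)
        (lt_of_le_of_ne (hmin y P.end_mem_support) hmy) heq
    · have hmx : m ≠ x := by
        intro h
        have hpath1 : (P.takeUntil m hm_mem).IsPath := hP.takeUntil hm_mem
        subst h
        have h9 := closed_path_length _ hpath1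
        omega
      exact KEY m y x _ _ hadm2 hadm1 (by omega) (by omega) (hmin y P.end_mem_support)
        (lt_of_le_of_ne (hmin x P.start_mem_support) hmx) heq.symm
  have C : (exactPowerGraph G p).Coloring (Fin q → Fin (s + 2)) :=
    SimpleGraph.Coloring.mk col valid
  have hcard := C.colorable
  rwa [Fintype.card_fun, Fintype.card_fin, Fintype.card_fin] at hcard

end Ordered

end ExactPowerAux

/-- Theorem 11(b): for odd positive `p`, a finite graph `G` with odd girth at least `p+1`, and
`q = wcol_p(G)`, `χ(G^[♯p]) ≤ (⌊p/2⌋+2)^q`. -/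
theorem chromaticNumber_exactPowerGraph_le_pow_wcol
    [Fintype V] (G : SimpleGraph V) (p : ℕ) (hp : Odd p)
    (hgirth : OddGirthAtLeast G (p + 1)) (q : ℕ) (hq : q = wcol G p) :
    (exactPowerGraph G p).chromaticNumber ≤ (((p / 2 + 2) ^ q : ℕ) : ℕ∞) := by
  classical
  set s := p / 2 with hs_def
  have hp2 : p = 2 * s + 1 := by
    rcases hp with ⟨k, hk⟩
    omega
  have hSne : { m : ℕ | ∃ L : LinearOrder V, ∀ y : V,
      {x : V | WeaklyAccessible G L p x y}.ncard ≤ m }.Nonempty := by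
    refine ⟨Fintype.card V,
      LinearOrder.lift' (Fintype.equivFin V) (Fintype.equivFin V).injective, fun y => ?_⟩
    calc {x : V | _}.ncard ≤ (Set.univ : Set V).ncard :=
          Set.ncard_le_ncard (Set.subset_univ _) Set.finite_univ
      _ = Fintype.card V := by rw [Set.ncard_univ, Nat.card_eq_fintype_card]
  obtain ⟨L₀, hL₀⟩ := Nat.sInf_mem hSne
  letI := L₀
  have hq' : q = 1 + sInf { m : ℕ | ∃ L : LinearOrder V, ∀ y : V,
      {x : V | WeaklyAccessible G L p x y}.ncard ≤ m } := hq
  have hQ : ∀ y : V, {x : V | WeaklyAccessible G L₀ p x y}.ncard < q := by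
    intro y
    have := hL₀ y
    omega
  have hcol := ExactPowerAux.main_colorable (L := L₀) G p q s hp2 hgirth hQ
  exact hcol.chromaticNumber_le
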